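/- (Multiplication, Lemma 3.1 of LDC) In LDC(N≥): if Γ ⊢ a :^q A, then for every r₀ ∈ ℕ, r₀·Γ ⊢ a :^{r₀·q} A. -/

import Mathlib

/-!
The simply-typed calculus LDC(N≥): graded by the preordered semiring of natural
numbers with the descending order, i.e. the preorder `q <: q'` holds iff `q' ≤ q`.
-/

namespace LDC

/-- Types of LDC(N≥): `Unit`, graded functions `^r A → B`, graded products
`^r A₁ × A₂` and sums `A₁ + A₂`. -/
inductive Ty : Type where
  | unit : Ty
  | arr : ℕ → Ty → Ty → Ty
  | prod : ℕ → Ty → Ty → Ty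
  | sum : Ty → Ty → Ty

/-- Terms of LDC(N≥), with variables named by natural numbers. -/
inductive Tm : Type where
  /-- variable `x` -/
  | var : ℕ → Tm
  /-- `λ^r x:A. b` -/
  | lam : ℕ → ℕ → Ty → Tm → Tm
  /-- application `b a^r` -/
  | app : Tm → Tm → ℕ → Tm
  /-- `unit` -/
  | unit : Tm
  /-- `let_{q₀} unit be a in b` -/
  | letUnit : ℕ → Tm → Tm → Tm
  /-- `(a₁^r, a₂)` -/
  | pair : Tm → ℕ → Tm → Tm
  /-- `let_{q₀} (x^r, y) be a in b` -/
  | letPair : ℕ → ℕ → ℕ → ℕ → Tm → Tm → Tm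
  /-- `inj₁ a` -/
  | inj1 : Tm → Tm
  /-- `inj₂ a` -/
  | inj2 : Tm → Tm
  /-- `case_{q₀} a of x₁.b₁; x₂.b₂` -/
  | case : ℕ → Tm → ℕ → Tm → ℕ → Tm → Tm

/-- Free variables of a term. -/
def fv : Tm → Finset ℕ
  | .var x => {x}
  | .lam _ x _ b => fv b \ {x}
  | .app b a _ => fv b ∪ fv a
  | .unit => ∅
  | .letUnit _ a b => fv a ∪ fv b
  | .pair a _ b => fv a ∪ fv b
  | .letPair _ x _ y a b => fv a ∪ (fv b \ {x, y})
  | .inj1 a => fv a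
  | .inj2 a => fv a
  | .case _ a x₁ b₁ x₂ b₂ => fv a ∪ (fv b₁ \ {x₁}) ∪ (fv b₂ \ {x₂})

/-- Capture-avoiding substitution `a{c/z}` of `c` for the free occurrences of
`z` in `a` (binders shadowing `z` are left untouched). -/
def subst (z : ℕ) (c : Tm) : Tm → Tm
  | .var x => if x = z then c else .var x
  | .lam r x A b => .lam r x A (if x = z then b else subst z c b)
  | .app b a r => .app (subst z c b) (subst z c a) r
  | .unit => .unit
  | .letUnit q a b => .letUnit q (subst z c a) (subst z c b)
  | .pair a r b => .pair (subst z c a) r (subst z c b)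
  | .letPair q x r y a b =>
      .letPair q x r y (subst z c a) (if x = z ∨ y = z then b else subst z c b)
  | .inj1 a => .inj1 (subst z c a)
  | .inj2 a => .inj2 (subst z c a)
  | .case q a x₁ b₁ x₂ b₂ =>
      .case q (subst z c a) x₁ (if x₁ = z then b₁ else subst z c b₁)
        x₂ (if x₂ = z then b₂ else subst z c b₂)

/-- A context is a list of graded assumptions `x :^q A`. -/
abbrev Ctx := List (ℕ × ℕ × Ty)

/-- `⌊Γ⌋`: the underlying ungraded context. -/
def floor (Γ : Ctx) : List (ℕ × Ty) := Γ.map (fun e => (e.1, e.2.2))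

/-- `Γ₁ + Γ₂`: pointwise addition of grades (meaningful when `⌊Γ₁⌋ = ⌊Γ₂⌋`). -/
def ctxAdd (Γ₁ Γ₂ : Ctx) : Ctx :=
  List.zipWith (fun e₁ e₂ => (e₁.1, e₁.2.1 + e₂.2.1, e₁.2.2)) Γ₁ Γ₂

/-- `q·Γ`: multiply every grade of `Γ` by `q`. -/
def ctxSMul (q : ℕ) (Γ : Ctx) : Ctx := Γ.map (fun e => (e.1, q * e.2.1, e.2.2))

/-- The preorder `q <: q'` of N≥, i.e. `q' ≤ q` (descending order). -/
def gradeLe (q q' : ℕ) : Prop := q' ≤ q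

/-- `Γ <: Γ'`: same underlying assumptions, grades pointwise related by `<:`. -/
def ctxLe (Γ Γ' : Ctx) : Prop :=
  List.Forall₂ (fun e e' => e.1 = e'.1 ∧ e.2.2 = e'.2.2 ∧ gradeLe e.2.1 e'.2.1) Γ Γ'

/-- The typing judgment `Γ ⊢ a :^q A` of LDC(N≥). -/
inductive Typing : Ctx → Tm → ℕ → Ty → Prop where
  | var (Γ₁ Γ₂ : Ctx) (x q : ℕ) (A : Ty) :
      Typing (ctxSMul 0 Γ₁ ++ [(x, q, A)] ++ ctxSMul 0 Γ₂) (.var x) q A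
  | lam {Γ : Ctx} {b : Tm} {q : ℕ} {B : Ty} (r x : ℕ) (A : Ty) :
      Typing (Γ ++ [(x, q * r, A)]) b q B →
      Typing Γ (.lam r x A b) q (.arr r A B)
  | app {Γ₁ Γ₂ : Ctx} {b a : Tm} {q r : ℕ} {A B : Ty} :
      Typing Γ₁ b q (.arr r A B) →
      Typing Γ₂ a (q * r) A →
      floor Γ₁ = floor Γ₂ →
      Typing (ctxAdd Γ₁ Γ₂) (.app b a r) q B
  | unit (Γ : Ctx) (q : ℕ) : Typing (ctxSMul 0 Γ) .unit q .unit
  | letUnit {Γ₁ Γ₂ : Ctx} {a b : Tm} {q q₀ : ℕ} {B : Ty} :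
      Typing Γ₁ a (q * q₀) .unit →
      Typing Γ₂ b q B →
      gradeLe q₀ 1 →
      floor Γ₁ = floor Γ₂ →
      Typing (ctxAdd Γ₁ Γ₂) (.letUnit q₀ a b) q B
  | pair {Γ₁ Γ₂ : Ctx} {a₁ a₂ : Tm} {q r : ℕ} {A₁ A₂ : Ty} :
      Typing Γ₁ a₁ (q * r) A₁ →
      Typing Γ₂ a₂ q A₂ →
      floor Γ₁ = floor Γ₂ →
      Typing (ctxAdd Γ₁ Γ₂) (.pair a₁ r a₂) q (.prod r A₁ A₂)
  | letPair {Γ₁ Γ₂ : Ctx} {a b : Tm} {q q₀ r x y : ℕ} {A₁ A₂ B : Ty} :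
      Typing Γ₁ a (q * q₀) (.prod r A₁ A₂) →
      Typing (Γ₂ ++ [(x, q * q₀ * r, A₁), (y, q * q₀, A₂)]) b q B →
      gradeLe q₀ 1 →
      floor Γ₁ = floor Γ₂ →
      Typing (ctxAdd Γ₁ Γ₂) (.letPair q₀ x r y a b) q B
  | inj1 {Γ : Ctx} {a₁ : Tm} {q : ℕ} {A₁ : Ty} (A₂ : Ty) :
      Typing Γ a₁ q A₁ → Typing Γ (.inj1 a₁) q (.sum A₁ A₂)
  | inj2 {Γ : Ctx} {a₂ : Tm} {q : ℕ} {A₂ : Ty} (A₁ : Ty) :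
      Typing Γ a₂ q A₂ → Typing Γ (.inj2 a₂) q (.sum A₁ A₂)
  | case {Γ₁ Γ₂ : Ctx} {a b₁ b₂ : Tm} {q q₀ x₁ x₂ : ℕ} {A₁ A₂ B : Ty} :
      Typing Γ₁ a (q * q₀) (.sum A₁ A₂) →
      Typing (Γ₂ ++ [(x₁, q * q₀, A₁)]) b₁ q B →
      Typing (Γ₂ ++ [(x₂, q * q₀, A₂)]) b₂ q B →
      gradeLe q₀ 1 →
      floor Γ₁ = floor Γ₂ →
      Typing (ctxAdd Γ₁ Γ₂) (.case q₀ a x₁ b₁ x₂ b₂) q B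
  | subL {Γ Γ' : Ctx} {a : Tm} {q : ℕ} {A : Ty} :
      Typing Γ' a q A → ctxLe Γ Γ' → Typing Γ a q A
  | subR {Γ : Ctx} {a : Tm} {q q' : ℕ} {A : Ty} :
      Typing Γ a q A → gradeLe q q' → Typing Γ a q' A

/-- Values: λ-abstractions, `unit`, pairs and injections. -/
def IsValue : Tm → Prop
  | .lam _ _ _ _ => True
  | .unit => True
  | .pair _ _ _ => True
  | .inj1 _ => True
  | .inj2 _ => True
  | _ => False

/-- Call-by-name small-step reduction `⊢ a ⇝ a'`. -/
inductive Step : Tm → Tm → Prop where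
  | appBeta (r x : ℕ) (A : Ty) (b a : Tm) :
      Step (.app (.lam r x A b) a r) (subst x a b)
  | letUnitBeta (q₀ : ℕ) (b : Tm) :
      Step (.letUnit q₀ .unit b) b
  | letPairBeta (q₀ x r y : ℕ) (a₁ a₂ b : Tm) :
      Step (.letPair q₀ x r y (.pair a₁ r a₂) b) (subst y a₂ (subst x a₁ b))
  | caseBeta1 (q₀ : ℕ) (a₁ : Tm) (x₁ : ℕ) (b₁ : Tm) (x₂ : ℕ) (b₂ : Tm) :
      Step (.case q₀ (.inj1 a₁) x₁ b₁ x₂ b₂) (subst x₁ a₁ b₁)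
  | caseBeta2 (q₀ : ℕ) (a₂ : Tm) (x₁ : ℕ) (b₁ : Tm) (x₂ : ℕ) (b₂ : Tm) :
      Step (.case q₀ (.inj2 a₂) x₁ b₁ x₂ b₂) (subst x₂ a₂ b₂)
  | appCong {b b' : Tm} (a : Tm) (r : ℕ) :
      Step b b' → Step (.app b a r) (.app b' a r)
  | letUnitCong {a a' : Tm} (q₀ : ℕ) (b : Tm) :
      Step a a' → Step (.letUnit q₀ a b) (.letUnit q₀ a' b)
  | letPairCong {a a' : Tm} (q₀ x r y : ℕ) (b : Tm) :
      Step a a' → Step (.letPair q₀ x r y a b) (.letPair q₀ x r y a' b)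
  | caseCong {a a' : Tm} (q₀ x₁ : ℕ) (b₁ : Tm) (x₂ : ℕ) (b₂ : Tm) :
      Step a a' → Step (.case q₀ a x₁ b₁ x₂ b₂) (.case q₀ a' x₁ b₁ x₂ b₂)

/-- A heap is a list of weighted bindings `x ↦^q a`. -/
abbrev Heap := List (ℕ × ℕ × Tm)

/-- The set of variables bound in a heap. -/
def heapDom (H : Heap) : Finset ℕ := (H.map Prod.fst).toFinset

/-- The heap reduction judgment `[H] a ⟹^q_S [H'] a'` of LDC(N≥). -/
inductive HeapStep : Heap → Tm → ℕ → Finset ℕ → Heap → Tm → Prop where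
  | var {H₁ H₂ : Heap} {x r q : ℕ} {a : Tm} {S : Finset ℕ} :
      q ≠ 0 →
      HeapStep (H₁ ++ [(x, r + q, a)] ++ H₂) (.var x) q S (H₁ ++ [(x, r, a)] ++ H₂) a
  | discard {H H' : Heap} {a a' : Tm} {q q' : ℕ} {S : Finset ℕ} :
      HeapStep H a q S H' a' → gradeLe q q' → HeapStep H a q' S H' a'
  | appCong {H H' : Heap} {b b' : Tm} {q : ℕ} {S : Finset ℕ} (a : Tm) (r : ℕ) :
      HeapStep H b q (S ∪ fv a) H' b' →
      HeapStep H (.app b a r) q S H' (.app b' a r)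
  | letUnitCong {H H' : Heap} {a a' : Tm} {q : ℕ} {S : Finset ℕ} (q₀ : ℕ) (b : Tm) :
      HeapStep H a q (S ∪ fv b) H' a' →
      HeapStep H (.letUnit q₀ a b) q S H' (.letUnit q₀ a' b)
  | letPairCong {H H' : Heap} {a a' : Tm} {q : ℕ} {S : Finset ℕ} (q₀ x r y : ℕ) (b : Tm) :
      HeapStep H a q (S ∪ fv b) H' a' →
      HeapStep H (.letPair q₀ x r y a b) q S H' (.letPair q₀ x r y a' b)
  | caseCong {H H' : Heap} {a a' : Tm} {q : ℕ} {S : Finset ℕ} (q₀ x₁ : ℕ) (b₁ : Tm) (x₂ : ℕ) (b₂ : Tm) :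
      HeapStep H a q (S ∪ fv b₁ ∪ fv b₂) H' a' →
      HeapStep H (.case q₀ a x₁ b₁ x₂ b₂) q S H' (.case q₀ a' x₁ b₁ x₂ b₂)
  | appBeta {H : Heap} {S : Finset ℕ} (r x : ℕ) (A : Ty) (b a : Tm) (q : ℕ) {x' : ℕ} :
      x' ∉ S → x' ∉ heapDom H →
      HeapStep H (.app (.lam r x A b) a r) q S
        (H ++ [(x', q * r, a)]) (subst x (.var x') b)
  | letUnitBeta {H : Heap} {S : Finset ℕ} (q₀ : ℕ) (b : Tm) (q : ℕ) :
      HeapStep H (.letUnit q₀ .unit b) q S H b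
  | letPairBeta {H : Heap} {S : Finset ℕ} (q₀ x r y : ℕ) (a₁ a₂ b : Tm) (q : ℕ) {x' y' : ℕ} :
      x' ∉ S → x' ∉ heapDom H → y' ∉ S → y' ∉ heapDom H → x' ≠ y' →
      HeapStep H (.letPair q₀ x r y (.pair a₁ r a₂) b) q S
        (H ++ [(x', q * q₀ * r, a₁), (y', q * q₀, a₂)])
        (subst y (.var y') (subst x (.var x') b))
  | caseBeta1 {H : Heap} {S : Finset ℕ} (q₀ : ℕ) (a₁ : Tm) (x₁ : ℕ) (b₁ : Tm) (x₂ : ℕ) (b₂ : Tm) (q : ℕ) {x' : ℕ} :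
      x' ∉ S → x' ∉ heapDom H →
      HeapStep H (.case q₀ (.inj1 a₁) x₁ b₁ x₂ b₂) q S
        (H ++ [(x', q * q₀, a₁)]) (subst x₁ (.var x') b₁)
  | caseBeta2 {H : Heap} {S : Finset ℕ} (q₀ : ℕ) (a₂ : Tm) (x₁ : ℕ) (b₁ : Tm) (x₂ : ℕ) (b₂ : Tm) (q : ℕ) {x' : ℕ} :
      x' ∉ S → x' ∉ heapDom H →
      HeapStep H (.case q₀ (.inj2 a₂) x₁ b₁ x₂ b₂) q S
        (H ++ [(x', q * q₀, a₂)]) (subst x₂ (.var x') b₂)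

/-- The compatibility judgment `H ⊨ Γ` between heaps and contexts. -/
inductive Compat : Heap → Ctx → Prop where
  | nil : Compat [] []
  | cons {H : Heap} {Γ Γ₀ : Ctx} {x q : ℕ} {a : Tm} {A : Ty} :
      floor Γ₀ = floor Γ →
      Typing Γ₀ a q A →
      Compat H (ctxAdd Γ Γ₀) →
      Compat (H ++ [(x, q, a)]) (Γ ++ [(x, q, A)])

/-- `n` successive heap reduction steps at grade `q`, where at each step the
support set is the domain of the current heap together with the free
variables of the current term. -/
inductive HeapSteps : Heap → Tm → ℕ → ℕ → Heap → Tm → Prop where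
  | refl (H : Heap) (a : Tm) (q : ℕ) : HeapSteps H a q 0 H a
  | step {H H' H'' : Heap} {a a' a'' : Tm} {q n : ℕ} :
      HeapStep H a q (heapDom H ∪ fv a) H' a' →
      HeapSteps H' a' q n H'' a'' →
      HeapSteps H a q (n + 1) H'' a''

lemma ctxSMul_append (r : ℕ) (Γ₁ Γ₂ : Ctx) :
    ctxSMul r (Γ₁ ++ Γ₂) = ctxSMul r Γ₁ ++ ctxSMul r Γ₂ :=
  List.map_append

lemma ctxSMul_zero_smul (r : ℕ) (Γ : Ctx) :
    ctxSMul r (ctxSMul 0 Γ) = ctxSMul 0 Γ := by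
  simp [ctxSMul, List.map_map, Function.comp]

lemma ctxSMul_ctxAdd (r : ℕ) (Γ₁ Γ₂ : Ctx) :
    ctxSMul r (ctxAdd Γ₁ Γ₂) = ctxAdd (ctxSMul r Γ₁) (ctxSMul r Γ₂) := by
  induction Γ₁ generalizing Γ₂ with
  | nil => simp [ctxSMul, ctxAdd]
  | cons e Γ ih =>
    cases Γ₂ with
    | nil => simp [ctxSMul, ctxAdd]
    | cons e₂ Γ₂ => simp [ctxSMul, ctxAdd, Nat.mul_add] at *

lemma floor_ctxSMul (r : ℕ) (Γ : Ctx) : floor (ctxSMul r Γ) = floor Γ := by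
  simp [floor, ctxSMul, List.map_map, Function.comp]

lemma ctxLe_ctxSMul {Γ Γ' : Ctx} (r : ℕ) (h : ctxLe Γ Γ') :
    ctxLe (ctxSMul r Γ) (ctxSMul r Γ') := by
  induction h with
  | nil => exact List.Forall₂.nil
  | cons h _ ih =>
    exact List.Forall₂.cons ⟨h.1, h.2.1, Nat.mul_le_mul_left r h.2.2⟩ ih

end LDC

/-- **Multiplication (Lemma 3.1 of LDC).** In LDC(N≥): if `Γ ⊢ a :^q A`, then
for every `r₀ ∈ ℕ`, `r₀·Γ ⊢ a :^{r₀·q} A`. -/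
theorem LDC.multiplication {Γ : LDC.Ctx} {a : LDC.Tm} {q : ℕ} {A : LDC.Ty}
    (h : LDC.Typing Γ a q A) (r₀ : ℕ) :
    LDC.Typing (LDC.ctxSMul r₀ Γ) a (r₀ * q) A := by
  induction h with
  | var Γ₁ Γ₂ x q A =>
    rw [ctxSMul_append, ctxSMul_append, ctxSMul_zero_smul, ctxSMul_zero_smul]
    exact .var Γ₁ Γ₂ x (r₀ * q) A
  | lam r x A _ ih =>
    refine .lam r x A ?_
    have := ih
    rw [ctxSMul_append] at this
    simpa [ctxSMul, Nat.mul_assoc] using this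
  | app _ _ hfl ihb iha =>
    rw [ctxSMul_ctxAdd]
    exact .app ihb (by rw [Nat.mul_assoc]; exact iha) (by rw [floor_ctxSMul, floor_ctxSMul, hfl])
  | unit Γ q => rw [ctxSMul_zero_smul]; exact .unit Γ (r₀ * q)
  | letUnit _ _ hq₀ hfl iha ihb =>
    rw [ctxSMul_ctxAdd]
    exact .letUnit (by rw [Nat.mul_assoc]; exact iha) ihb hq₀
      (by rw [floor_ctxSMul, floor_ctxSMul, hfl])
  | pair _ _ hfl ih₁ ih₂ =>
    rw [ctxSMul_ctxAdd]
    exact .pair (by rw [Nat.mul_assoc]; exact ih₁) ih₂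
      (by rw [floor_ctxSMul, floor_ctxSMul, hfl])
  | letPair _ _ hq₀ hfl iha ihb =>
    rw [ctxSMul_ctxAdd]
    refine .letPair (by rw [Nat.mul_assoc]; exact iha) ?_ hq₀
      (by rw [floor_ctxSMul, floor_ctxSMul, hfl])
    rw [ctxSMul_append] at ihb
    simpa [ctxSMul, Nat.mul_assoc] using ihb
  | inj1 A₂ _ ih => exact .inj1 A₂ ih
  | inj2 A₁ _ ih => exact .inj2 A₁ ih
  | case _ _ _ hq₀ hfl iha ih₁ ih₂ =>
    rw [ctxSMul_ctxAdd]
    refine .case (by rw [Nat.mul_assoc]; exact iha) ?_ ?_ hq₀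
      (by rw [floor_ctxSMul, floor_ctxSMul, hfl]) <;>
    · first
      | (rw [ctxSMul_append] at ih₁; simpa [ctxSMul, Nat.mul_assoc] using ih₁)
      | (rw [ctxSMul_append] at ih₂; simpa [ctxSMul, Nat.mul_assoc] using ih₂)
  | subL _ hle ih => exact .subL ih (ctxLe_ctxSMul r₀ hle)
  | subR _ hle ih => exact .subR ih (Nat.mul_le_mul_left r₀ hle)
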